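/- Let A, B, C ∈ 𝔰𝔩(4,ℝ) be pairwise-commuting, and let T be a full torsion tensor of (𝔤_{A,B,C}, φ), i.e., a linear map T : ℝ⁷ → ℝ⁷ with ∇_X φ = ι_{T(X)}ψ for all X. Then ∑_{i=1}^{7} T(∇_{e_i} e_i, e_j) = 0 for every j ∈ {1,…,7}, and for j ∈ {1,2,7} the divergence of T satisfies ⟨div T, e_j⟩ = ∑_{i=3}^{6} T(e_i, S(Dʲ) e_i), where D¹ := B, D² := C, D⁷ := A and S(M) := (M + Mᵀ)/2. -/

import Mathlib

open Matrix

noncomputable section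

/-- Standard basis vector `e_{i+1}` of `ℝ⁷` (index `0 ↔ e₁`, …, `6 ↔ e₇`). -/
def E (i : Fin 7) : Fin 7 → ℝ := Pi.single i 1

/-- The standard inner product on `ℝ⁷` for which `e₁, …, e₇` is orthonormal. -/
def inner7 (X Y : Fin 7 → ℝ) : ℝ := ∑ i, X i * Y i

/-- The component of `X ∈ ℝ⁷` in `𝔫 = span{e₃,e₄,e₅,e₆} ≅ ℝ⁴`. -/
def nPart (X : Fin 7 → ℝ) : Fin 4 → ℝ := fun i => X ⟨i.val + 2, by omega⟩

/-- The inclusion `ℝ⁴ ≅ 𝔫 = span{e₃,e₄,e₅,e₆} ⊆ ℝ⁷`. -/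
def emb (w : Fin 4 → ℝ) : Fin 7 → ℝ :=
  fun j => if h : 2 ≤ j.val ∧ j.val ≤ 5 then w ⟨j.val - 2, by omega⟩ else 0

/-- For `X = λ₁e₁ + λ₂e₂ + λ₇e₇ (+ 𝔫-part)`, the matrix `M_X = λ₁B + λ₂C + λ₇A`. -/
def MX (A B C : Matrix (Fin 4) (Fin 4) ℝ) (X : Fin 7 → ℝ) : Matrix (Fin 4) (Fin 4) ℝ :=
  X 0 • B + X 1 • C + X 6 • A

/-- The bilinear antisymmetric bracket on `ℝ⁷` determined by `[𝔞,𝔞] = 0`, `[𝔫,𝔫] = 0`,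
`[e₇,v] = Av`, `[e₁,v] = Bv`, `[e₂,v] = Cv` for `v ∈ 𝔫` and `[v,eₖ] = −[eₖ,v]`,
where `𝔞 = span{e₁,e₂,e₇}` and `𝔫 = span{e₃,e₄,e₅,e₆}`. -/
def bracket (A B C : Matrix (Fin 4) (Fin 4) ℝ) (X Y : Fin 7 → ℝ) : Fin 7 → ℝ :=
  emb ((MX A B C X).mulVec (nPart Y) - (MX A B C Y).mulVec (nPart X))

/-- The symmetric part `S(M) = (M + Mᵀ)/2` of a matrix. -/
def symPart (M : Matrix (Fin 4) (Fin 4) ℝ) : Matrix (Fin 4) (Fin 4) ℝ :=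
  (1/2 : ℝ) • (M + Mᵀ)

/-- The antisymmetric part `A(M) = (M − Mᵀ)/2` of a matrix. -/
def skewPart (M : Matrix (Fin 4) (Fin 4) ℝ) : Matrix (Fin 4) (Fin 4) ℝ :=
  (1/2 : ℝ) • (M - Mᵀ)

/-- `𝔞 = span{e₁,e₂,e₇} ⊆ ℝ⁷`. -/
def aSub : Submodule ℝ (Fin 7 → ℝ) := Submodule.span ℝ {E 0, E 1, E 6}

/-- `𝔫 = span{e₃,e₄,e₅,e₆} ⊆ ℝ⁷`. -/
def nSub : Submodule ℝ (Fin 7 → ℝ) := Submodule.span ℝ {E 2, E 3, E 4, E 5}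

/-- `∇` satisfies the Koszul formula
`⟨∇_X Y, Z⟩ = ½(⟨[X,Y],Z⟩ − ⟨[Y,Z],X⟩ + ⟨[Z,X],Y⟩)`. -/
def IsKoszul (A B C : Matrix (Fin 4) (Fin 4) ℝ)
    (nabla : (Fin 7 → ℝ) → (Fin 7 → ℝ) → (Fin 7 → ℝ)) : Prop :=
  ∀ X Y Z, inner7 (nabla X Y) Z =
    (1/2 : ℝ) * (inner7 (bracket A B C X Y) Z - inner7 (bracket A B C Y Z) X
      + inner7 (bracket A B C Z X) Y)

/-- The wedge `e^{(i+1)(j+1)(k+1)}` of dual basis elements of `(ℝ⁷)*`, as a 3-form. -/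
def w3 (i j k : Fin 7) (X Y Z : Fin 7 → ℝ) : ℝ :=
  Matrix.det !![X i, X j, X k; Y i, Y j, Y k; Z i, Z j, Z k]

/-- The wedge `e^{(i+1)(j+1)(k+1)(l+1)}` of dual basis elements of `(ℝ⁷)*`, as a 4-form. -/
def w4 (i j k l : Fin 7) (X Y Z W : Fin 7 → ℝ) : ℝ :=
  Matrix.det !![X i, X j, X k, X l; Y i, Y j, Y k, Y l; Z i, Z j, Z k, Z l;
    W i, W j, W k, W l]

/-- The `G₂`-structure 3-form `φ = e¹²⁷ + e³⁴⁷ + e⁵⁶⁷ + e¹³⁵ − e¹⁴⁶ − e²³⁶ − e²⁴⁵`. -/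
def phi (X Y Z : Fin 7 → ℝ) : ℝ :=
  w3 0 1 6 X Y Z + w3 2 3 6 X Y Z + w3 4 5 6 X Y Z + w3 0 2 4 X Y Z
    - w3 0 3 5 X Y Z - w3 1 2 5 X Y Z - w3 1 3 4 X Y Z

/-- The dual 4-form `ψ = e³⁴⁵⁶ + e¹²⁵⁶ + e¹²³⁴ − e²⁴⁶⁷ + e²³⁵⁷ + e¹⁴⁵⁷ + e¹³⁶⁷`. -/
def psi (X Y Z W : Fin 7 → ℝ) : ℝ :=
  w4 2 3 4 5 X Y Z W + w4 0 1 4 5 X Y Z W + w4 0 1 2 3 X Y Z W - w4 1 3 5 6 X Y Z W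
    + w4 1 2 4 6 X Y Z W + w4 0 3 4 6 X Y Z W + w4 0 2 5 6 X Y Z W

/-- `T : ℝ⁷ → ℝ⁷` is a full torsion tensor of `(𝔤_{A,B,C}, φ)`: `∇_X φ = ι_{T(X)} ψ`
for all `X`, where `(∇_X φ)(Y,Z,W) = −φ(∇_X Y,Z,W) − φ(Y,∇_X Z,W) − φ(Y,Z,∇_X W)`
and `(ι_V ψ)(Y,Z,W) = ψ(V,Y,Z,W)`. -/
def IsFullTorsion (nabla : (Fin 7 → ℝ) → (Fin 7 → ℝ) → (Fin 7 → ℝ))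
    (T : (Fin 7 → ℝ) → (Fin 7 → ℝ)) : Prop :=
  ∀ X Y Z W, -phi (nabla X Y) Z W - phi Y (nabla X Z) W - phi Y Z (nabla X W)
    = psi (T X) Y Z W

/-- `T(X,Y) := ⟨T(X),Y⟩`. -/
def Tbil (T : (Fin 7 → ℝ) → (Fin 7 → ℝ)) (X Y : Fin 7 → ℝ) : ℝ := inner7 (T X) Y

/-- The divergence of `T`, determined by
`⟨div T, e_j⟩ = −∑ᵢ T(∇_{e_i}e_i, e_j) − ∑ᵢ T(e_i, ∇_{e_i}e_j)`. -/
def divT (nabla : (Fin 7 → ℝ) → (Fin 7 → ℝ) → (Fin 7 → ℝ))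
    (T : (Fin 7 → ℝ) → (Fin 7 → ℝ)) : Fin 7 → ℝ :=
  fun j => -∑ i, Tbil T (nabla (E i) (E i)) (E j) - ∑ i, Tbil T (E i) (nabla (E i) (E j))

end

noncomputable section Helpers
open Matrix

/-! ### Auxiliary machinery -/

/-- The Koszul-determined connection, explicitly. -/
def K (A B C : Matrix (Fin 4) (Fin 4) ℝ) (X Y : Fin 7 → ℝ) : Fin 7 → ℝ := fun j =>
  (1/2 : ℝ) * (inner7 (bracket A B C X Y) (E j) - inner7 (bracket A B C Y (E j)) X
      + inner7 (bracket A B C (E j) X) Y)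

lemma inner7_E (v : Fin 7 → ℝ) (j : Fin 7) : inner7 v (E j) = v j := by
  simp [inner7, E, Pi.single_apply]

lemma nabla_K {A B C : Matrix (Fin 4) (Fin 4) ℝ} {nabla} (hK : IsKoszul A B C nabla)
    (X Y : Fin 7 → ℝ) : nabla X Y = K A B C X Y := by
  funext j; have h := hK X Y (E j); rwa [inner7_E] at h

/-! ### small value lemmas -/

lemma emb_w0 (w : Fin 4 → ℝ) : emb w 0 = 0 := rfl
lemma emb_w1 (w : Fin 4 → ℝ) : emb w 1 = 0 := rfl
lemma emb_w6 (w : Fin 4 → ℝ) : emb w 6 = 0 := rfl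
lemma emb_w2 (w : Fin 4 → ℝ) : emb w 2 = w 0 := rfl
lemma emb_w3 (w : Fin 4 → ℝ) : emb w 3 = w 1 := rfl
lemma emb_w4 (w : Fin 4 → ℝ) : emb w 4 = w 2 := rfl
lemma emb_w5 (w : Fin 4 → ℝ) : emb w 5 = w 3 := rfl

lemma emb_zero : emb (0 : Fin 4 → ℝ) = 0 := by funext j; fin_cases j <;> rfl
lemma emb_add (v w : Fin 4 → ℝ) : emb (v + w) = emb v + emb w := by
  funext j; simp only [Pi.add_apply, emb]; split <;> simp

lemma nPart_E0 : nPart (E 0) = 0 := by funext m; fin_cases m <;> rfl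
lemma nPart_E1 : nPart (E 1) = 0 := by funext m; fin_cases m <;> rfl
lemma nPart_E6 : nPart (E 6) = 0 := by funext m; fin_cases m <;> rfl
lemma nPart_E2 : nPart (E 2) = Pi.single 0 1 := by funext m; fin_cases m <;> rfl
lemma nPart_E3 : nPart (E 3) = Pi.single 1 1 := by funext m; fin_cases m <;> rfl
lemma nPart_E4 : nPart (E 4) = Pi.single 2 1 := by funext m; fin_cases m <;> rfl
lemma nPart_E5 : nPart (E 5) = Pi.single 3 1 := by funext m; fin_cases m <;> rfl

lemma nPart_zero : nPart (0 : Fin 7 → ℝ) = 0 := rfl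
lemma nPart_add (X Y : Fin 7 → ℝ) : nPart (X + Y) = nPart X + nPart Y := rfl

section MXlemmas
variable (A B C : Matrix (Fin 4) (Fin 4) ℝ)

lemma MX_E0 : MX A B C (E 0) = B := by
  simp [MX, E, Pi.single_apply]
lemma MX_E1 : MX A B C (E 1) = C := by
  simp [MX, E, Pi.single_apply]
lemma MX_E6 : MX A B C (E 6) = A := by
  simp [MX, E, Pi.single_apply]
lemma MX_E2 : MX A B C (E 2) = 0 := by
  simp [MX, E, Pi.single_apply]
lemma MX_E3 : MX A B C (E 3) = 0 := by
  simp [MX, E, Pi.single_apply]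
lemma MX_E4 : MX A B C (E 4) = 0 := by
  simp [MX, E, Pi.single_apply]
lemma MX_E5 : MX A B C (E 5) = 0 := by
  simp [MX, E, Pi.single_apply]
lemma MX_zero : MX A B C 0 = 0 := by simp [MX]
lemma MX_add (X Y : Fin 7 → ℝ) :
    MX A B C (X + Y) = MX A B C X + MX A B C Y := by
  simp only [MX, Pi.add_apply, add_smul]; abel

/-! ### bracket linearity -/

lemma bracket_add_left (X X' Y : Fin 7 → ℝ) :
    bracket A B C (X + X') Y = bracket A B C X Y + bracket A B C X' Y := by
  unfold bracket
  rw [MX_add, nPart_add, Matrix.add_mulVec, Matrix.mulVec_add, ← emb_add]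
  congr 1; abel

lemma bracket_add_right (X Y Y' : Fin 7 → ℝ) :
    bracket A B C X (Y + Y') = bracket A B C X Y + bracket A B C X Y' := by
  unfold bracket
  rw [MX_add, nPart_add, Matrix.add_mulVec, Matrix.mulVec_add, ← emb_add]
  congr 1; abel

lemma bracket_zero_left (Y : Fin 7 → ℝ) : bracket A B C 0 Y = 0 := by
  unfold bracket
  rw [MX_zero, nPart_zero]
  simp [emb_zero]

lemma bracket_zero_right (X : Fin 7 → ℝ) : bracket A B C X 0 = 0 := by
  unfold bracket
  rw [MX_zero, nPart_zero]
  simp [emb_zero]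

end MXlemmas

lemma inner7_add_left (v v' w : Fin 7 → ℝ) :
    inner7 (v + v') w = inner7 v w + inner7 v' w := by
  simp [inner7, add_mul, Finset.sum_add_distrib]
lemma inner7_add_right (v w w' : Fin 7 → ℝ) :
    inner7 v (w + w') = inner7 v w + inner7 v w' := by
  simp [inner7, mul_add, Finset.sum_add_distrib]
lemma inner7_zero_left (w : Fin 7 → ℝ) : inner7 0 w = 0 := by simp [inner7]
lemma inner7_zero_right (v : Fin 7 → ℝ) : inner7 v 0 = 0 := by simp [inner7]
lemma inner7_neg_right (v w : Fin 7 → ℝ) : inner7 v (-w) = -inner7 v w := by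
  simp [inner7, mul_neg]

section Klemmas
variable (A B C : Matrix (Fin 4) (Fin 4) ℝ)

lemma K_add (X X' Y : Fin 7 → ℝ) :
    K A B C (X + X') Y = K A B C X Y + K A B C X' Y := by
  funext j
  simp only [K, Pi.add_apply, bracket_add_left, bracket_add_right, inner7_add_left,
    inner7_add_right]
  ring

lemma K_zero (Y : Fin 7 → ℝ) : K A B C 0 Y = 0 := by
  funext j
  simp only [K, bracket_zero_left, bracket_zero_right, inner7_zero_left, inner7_zero_right,
    Pi.zero_apply]
  ring

end Klemmas

/-! ### phi linearity -/

lemma phi_add1 (u v Z W : Fin 7 → ℝ) : phi (u + v) Z W = phi u Z W + phi v Z W := by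
  simp only [phi, w3, Matrix.det_fin_three, Pi.add_apply]
  norm_num [Matrix.vecHead, Matrix.vecTail, Function.comp, Matrix.cons_val_two, Matrix.cons_val_one, Matrix.cons_val_zero]
  ring

lemma phi_add2 (Y u v W : Fin 7 → ℝ) : phi Y (u + v) W = phi Y u W + phi Y v W := by
  simp only [phi, w3, Matrix.det_fin_three, Pi.add_apply]
  norm_num [Matrix.vecHead, Matrix.vecTail, Function.comp, Matrix.cons_val_two, Matrix.cons_val_one, Matrix.cons_val_zero]
  ring

lemma phi_add3 (Y Z u v : Fin 7 → ℝ) : phi Y Z (u + v) = phi Y Z u + phi Y Z v := by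
  simp only [phi, w3, Matrix.det_fin_three, Pi.add_apply]
  norm_num [Matrix.vecHead, Matrix.vecTail, Function.comp, Matrix.cons_val_two, Matrix.cons_val_one, Matrix.cons_val_zero]
  ring

lemma phi_zero1 (Z W : Fin 7 → ℝ) : phi 0 Z W = 0 := by
  simp only [phi, w3, Matrix.det_fin_three, Pi.zero_apply]
  norm_num [Matrix.vecHead, Matrix.vecTail, Function.comp, Matrix.cons_val_two, Matrix.cons_val_one, Matrix.cons_val_zero]

lemma phi_zero2 (Y W : Fin 7 → ℝ) : phi Y 0 W = 0 := by
  simp only [phi, w3, Matrix.det_fin_three, Pi.zero_apply]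
  norm_num [Matrix.vecHead, Matrix.vecTail, Function.comp, Matrix.cons_val_two, Matrix.cons_val_one, Matrix.cons_val_zero]

lemma phi_zero3 (Y Z : Fin 7 → ℝ) : phi Y Z 0 = 0 := by
  simp only [phi, w3, Matrix.det_fin_three, Pi.zero_apply]
  norm_num [Matrix.vecHead, Matrix.vecTail, Function.comp, Matrix.cons_val_two, Matrix.cons_val_one, Matrix.cons_val_zero]

/-! ### psi extraction -/

lemma det_fin_four' (M : Matrix (Fin 4) (Fin 4) ℝ) :
    M.det = M 0 0 * (M 1 1 * (M 2 2 * M 3 3 - M 2 3 * M 3 2)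
        - M 1 2 * (M 2 1 * M 3 3 - M 2 3 * M 3 1)
        + M 1 3 * (M 2 1 * M 3 2 - M 2 2 * M 3 1))
      - M 0 1 * (M 1 0 * (M 2 2 * M 3 3 - M 2 3 * M 3 2)
        - M 1 2 * (M 2 0 * M 3 3 - M 2 3 * M 3 0)
        + M 1 3 * (M 2 0 * M 3 2 - M 2 2 * M 3 0))
      + M 0 2 * (M 1 0 * (M 2 1 * M 3 3 - M 2 3 * M 3 1)
        - M 1 1 * (M 2 0 * M 3 3 - M 2 3 * M 3 0)
        + M 1 3 * (M 2 0 * M 3 1 - M 2 1 * M 3 0))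
      - M 0 3 * (M 1 0 * (M 2 1 * M 3 2 - M 2 2 * M 3 1)
        - M 1 1 * (M 2 0 * M 3 2 - M 2 2 * M 3 0)
        + M 1 2 * (M 2 0 * M 3 1 - M 2 1 * M 3 0)) := by
  have hs : Fin.succ (2 : Fin 3) = (3 : Fin 4) := rfl
  have hc : Fin.castSucc (2 : Fin 3) = (2 : Fin 4) := rfl
  have hv : ((3 : Fin 4) : ℕ) = 3 := rfl
  rw [Matrix.det_succ_row_zero]
  simp (config := { decide := true }) only [Fin.sum_univ_succ, Matrix.det_fin_three,
    Matrix.submatrix_apply, Fin.succAbove, Fin.lt_def, Finset.univ_eq_empty, Finset.sum_empty,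
    hs, hc, Fin.val_zero, Fin.val_one, Fin.val_two, if_true, if_false]
  norm_num [hs, hc, hv]
  ring

lemma psi_ext0 (V : Fin 7 → ℝ) : psi V (E 1) (E 4) (E 5) = V 0 := by
  simp (config := { decide := true }) only [psi, w4, det_fin_four', E, Pi.single_apply]
  norm_num [Matrix.vecHead, Matrix.vecTail, Function.comp, Matrix.cons_val_two, Matrix.cons_val_one, Matrix.cons_val_zero, Matrix.cons_val_three]

lemma psi_ext1 (V : Fin 7 → ℝ) : psi V (E 0) (E 4) (E 5) = -V 1 := by
  simp (config := { decide := true }) only [psi, w4, det_fin_four', E, Pi.single_apply]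
  norm_num [Matrix.vecHead, Matrix.vecTail, Function.comp, Matrix.cons_val_two, Matrix.cons_val_one, Matrix.cons_val_zero, Matrix.cons_val_three]

lemma psi_ext2 (V : Fin 7 → ℝ) : psi V (E 3) (E 4) (E 5) = V 2 := by
  simp (config := { decide := true }) only [psi, w4, det_fin_four', E, Pi.single_apply]
  norm_num [Matrix.vecHead, Matrix.vecTail, Function.comp, Matrix.cons_val_two, Matrix.cons_val_one, Matrix.cons_val_zero, Matrix.cons_val_three]

lemma psi_ext3 (V : Fin 7 → ℝ) : psi V (E 2) (E 4) (E 5) = -V 3 := by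
  simp (config := { decide := true }) only [psi, w4, det_fin_four', E, Pi.single_apply]
  norm_num [Matrix.vecHead, Matrix.vecTail, Function.comp, Matrix.cons_val_two, Matrix.cons_val_one, Matrix.cons_val_zero, Matrix.cons_val_three]

lemma psi_ext4 (V : Fin 7 → ℝ) : psi V (E 2) (E 3) (E 5) = V 4 := by
  simp (config := { decide := true }) only [psi, w4, det_fin_four', E, Pi.single_apply]
  norm_num [Matrix.vecHead, Matrix.vecTail, Function.comp, Matrix.cons_val_two, Matrix.cons_val_one, Matrix.cons_val_zero, Matrix.cons_val_three]

lemma psi_ext5 (V : Fin 7 → ℝ) : psi V (E 2) (E 3) (E 4) = -V 5 := by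
  simp (config := { decide := true }) only [psi, w4, det_fin_four', E, Pi.single_apply]
  norm_num [Matrix.vecHead, Matrix.vecTail, Function.comp, Matrix.cons_val_two, Matrix.cons_val_one, Matrix.cons_val_zero, Matrix.cons_val_three]

lemma psi_ext6 (V : Fin 7 → ℝ) : psi V (E 0) (E 2) (E 5) = -V 6 := by
  simp (config := { decide := true }) only [psi, w4, det_fin_four', E, Pi.single_apply]
  norm_num [Matrix.vecHead, Matrix.vecTail, Function.comp, Matrix.cons_val_two, Matrix.cons_val_one, Matrix.cons_val_zero, Matrix.cons_val_three]

/-! ### F functional -/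

def Fphi (A B C : Matrix (Fin 4) (Fin 4) ℝ) (Y Z W X : Fin 7 → ℝ) : ℝ :=
  -phi (K A B C X Y) Z W - phi Y (K A B C X Z) W - phi Y Z (K A B C X W)

lemma Fphi_add (A B C : Matrix (Fin 4) (Fin 4) ℝ) (Y Z W X X' : Fin 7 → ℝ) :
    Fphi A B C Y Z W (X + X') = Fphi A B C Y Z W X + Fphi A B C Y Z W X' := by
  simp only [Fphi, K_add, phi_add1, phi_add2, phi_add3]
  ring

lemma Fphi_zero (A B C : Matrix (Fin 4) (Fin 4) ℝ) (Y Z W : Fin 7 → ℝ) :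
    Fphi A B C Y Z W 0 = 0 := by
  simp only [Fphi, K_zero, phi_zero1, phi_zero2, phi_zero3]
  ring

/-! ### K values on basis vectors -/

def aVec (b c a : ℝ) : Fin 7 → ℝ := fun m =>
  if m = 0 then b else if m = 1 then c else if m = 6 then a else 0

section Kvalues
variable (A B C : Matrix (Fin 4) (Fin 4) ℝ)

lemma Kaa (i j : Fin 7) (hni : nPart (E i) = 0) (hnj : nPart (E j) = 0)
    (hei : ∀ w, emb w i = 0) (hej : ∀ w, emb w j = 0) : K A B C (E i) (E j) = 0 := by
  funext m
  simp only [K, bracket, hni, hnj, inner7_E, hei, hej, Matrix.mulVec_zero, sub_self,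
    emb_zero, Pi.zero_apply]
  ring

lemma Knn_gen (i : Fin 7) (k : Fin 4) (hni : nPart (E i) = Pi.single k 1)
    (hMi : MX A B C (E i) = 0) (hei : ∀ w, emb w i = w k) :
    K A B C (E i) (E i) = fun m => (MX A B C (E m)) k k := by
  funext m
  simp only [K, bracket, hni, hMi, inner7_E, hei, Matrix.mulVec_single_one, Matrix.col_apply, Matrix.zero_mulVec,
    Matrix.mulVec_zero, sub_self, emb_zero, Pi.zero_apply, Pi.sub_apply, mul_one]
  ring

lemma Kna_gen (i j : Fin 7) (k : Fin 4) (D : Matrix (Fin 4) (Fin 4) ℝ)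
    (hni : nPart (E i) = Pi.single k 1) (hMi : MX A B C (E i) = 0)
    (hei : ∀ w, emb w i = w k)
    (hnj : nPart (E j) = 0) (hMj : MX A B C (E j) = D) (hej : ∀ w, emb w j = 0) :
    K A B C (E i) (E j) = -emb ((symPart D).mulVec (Pi.single k 1)) := by
  funext m
  simp only [K, bracket, hni, hnj, hMi, hMj, inner7_E, hei, hej, Matrix.mulVec_single,
    Matrix.zero_mulVec, Matrix.mulVec_zero, sub_self, emb_zero, Pi.zero_apply,
    Pi.sub_apply, Pi.neg_apply, mul_one, zero_sub, sub_zero]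
  fin_cases m <;>
    simp (config := { decide := true }) [emb, nPart_E0, nPart_E1, nPart_E2, nPart_E3,
      nPart_E4, nPart_E5, nPart_E6, symPart, Matrix.transpose_apply, Matrix.mulVec_single,
      Matrix.smul_apply, Matrix.add_apply, Matrix.mulVec_zero] <;>
    ring

end Kvalues
lemma Tbil_zero (T : (Fin 7 → ℝ) → (Fin 7 → ℝ)) (X : Fin 7 → ℝ) : Tbil T X 0 = 0 :=
  inner7_zero_right _

lemma Tbil_neg (T : (Fin 7 → ℝ) → (Fin 7 → ℝ)) (X v : Fin 7 → ℝ) :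
    Tbil T X (-v) = -Tbil T X v :=
  inner7_neg_right _ _

lemma emb_single0 : emb (Pi.single (0 : Fin 4) 1) = E 2 := by funext j; fin_cases j <;> rfl
lemma emb_single1 : emb (Pi.single (1 : Fin 4) 1) = E 3 := by funext j; fin_cases j <;> rfl
lemma emb_single2 : emb (Pi.single (2 : Fin 4) 1) = E 4 := by funext j; fin_cases j <;> rfl
lemma emb_single3 : emb (Pi.single (3 : Fin 4) 1) = E 5 := by funext j; fin_cases j <;> rfl

end Helpers


set_option maxHeartbeats 1000000 in
/-- `∑ᵢ T(∇_{e_i}e_i, e_j) = 0` for every `j`, and for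
`j ∈ {1,2,7}` (indices `0,1,6` here) one has
`⟨div T, e_j⟩ = ∑_{i=3}^{6} T(e_i, S(Dʲ)e_i)` with `D¹ = B`, `D² = C`, `D⁷ = A`. -/
theorem divT_formula (A B C : Matrix (Fin 4) (Fin 4) ℝ)
    (hAB : A * B = B * A) (hAC : A * C = C * A) (hBC : B * C = C * B)
    (htA : Matrix.trace A = 0) (htB : Matrix.trace B = 0) (htC : Matrix.trace C = 0)
    (nabla : (Fin 7 → ℝ) → (Fin 7 → ℝ) → (Fin 7 → ℝ))
    (hK : IsKoszul A B C nabla)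
    (T : (Fin 7 → ℝ) → (Fin 7 → ℝ)) (hT : IsFullTorsion nabla T) :
    (∀ j : Fin 7, ∑ i, Tbil T (nabla (E i) (E i)) (E j) = 0) ∧
    inner7 (divT nabla T) (E 0)
      = ∑ i : Fin 4, Tbil T (emb (Pi.single i 1)) (emb ((symPart B).mulVec (Pi.single i 1))) ∧
    inner7 (divT nabla T) (E 1)
      = ∑ i : Fin 4, Tbil T (emb (Pi.single i 1)) (emb ((symPart C).mulVec (Pi.single i 1))) ∧
    inner7 (divT nabla T) (E 6)
      = ∑ i : Fin 4, Tbil T (emb (Pi.single i 1)) (emb ((symPart A).mulVec (Pi.single i 1))) := by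
  
  have hnab : ∀ X Y, nabla X Y = K A B C X Y := nabla_K hK
  have hv0 : nabla (E 0) (E 0) = 0 := by
    rw [hnab]; exact Kaa A B C 0 0 nPart_E0 nPart_E0 emb_w0 emb_w0
  have hv1 : nabla (E 1) (E 1) = 0 := by
    rw [hnab]; exact Kaa A B C 1 1 nPart_E1 nPart_E1 emb_w1 emb_w1
  have hv6 : nabla (E 6) (E 6) = 0 := by
    rw [hnab]; exact Kaa A B C 6 6 nPart_E6 nPart_E6 emb_w6 emb_w6
  have hv2 : nabla (E 2) (E 2) = aVec (B 0 0) (C 0 0) (A 0 0) := by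
    rw [hnab, Knn_gen A B C 2 0 nPart_E2 (MX_E2 A B C) emb_w2]
    funext m; fin_cases m <;>
      simp (config := { decide := true }) [MX, E, Pi.single_apply, aVec]
  have hv3 : nabla (E 3) (E 3) = aVec (B 1 1) (C 1 1) (A 1 1) := by
    rw [hnab, Knn_gen A B C 3 1 nPart_E3 (MX_E3 A B C) emb_w3]
    funext m; fin_cases m <;>
      simp (config := { decide := true }) [MX, E, Pi.single_apply, aVec]
  have hv4 : nabla (E 4) (E 4) = aVec (B 2 2) (C 2 2) (A 2 2) := by
    rw [hnab, Knn_gen A B C 4 2 nPart_E4 (MX_E4 A B C) emb_w4]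
    funext m; fin_cases m <;>
      simp (config := { decide := true }) [MX, E, Pi.single_apply, aVec]
  have hv5 : nabla (E 5) (E 5) = aVec (B 3 3) (C 3 3) (A 3 3) := by
    rw [hnab, Knn_gen A B C 5 3 nPart_E5 (MX_E5 A B C) emb_w5]
    funext m; fin_cases m <;>
      simp (config := { decide := true }) [MX, E, Pi.single_apply, aVec]
  have hsum : ∀ Y Z W : Fin 7 → ℝ, ∑ i : Fin 7, psi (T (nabla (E i) (E i))) Y Z W = 0 := by
    intro Y Z W
    have hps : ∀ X, psi (T X) Y Z W = Fphi A B C Y Z W X := by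
      intro X
      rw [← hT X Y Z W, hnab X Y, hnab X Z, hnab X W]; rfl
    have hs : aVec (B 0 0) (C 0 0) (A 0 0) + aVec (B 1 1) (C 1 1) (A 1 1)
        + aVec (B 2 2) (C 2 2) (A 2 2) + aVec (B 3 3) (C 3 3) (A 3 3) = 0 := by
      have ta : A 0 0 + A 1 1 + A 2 2 + A 3 3 = 0 := by
        simpa [Matrix.trace, Matrix.diag, Fin.sum_univ_four] using htA
      have tb : B 0 0 + B 1 1 + B 2 2 + B 3 3 = 0 := by
        simpa [Matrix.trace, Matrix.diag, Fin.sum_univ_four] using htB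
      have tc : C 0 0 + C 1 1 + C 2 2 + C 3 3 = 0 := by
        simpa [Matrix.trace, Matrix.diag, Fin.sum_univ_four] using htC
      funext m; fin_cases m <;>
        simp (config := { decide := true }) [aVec, Pi.add_apply] <;> linarith
    have hcomb : Fphi A B C Y Z W (aVec (B 0 0) (C 0 0) (A 0 0))
        + Fphi A B C Y Z W (aVec (B 1 1) (C 1 1) (A 1 1))
        + Fphi A B C Y Z W (aVec (B 2 2) (C 2 2) (A 2 2))
        + Fphi A B C Y Z W (aVec (B 3 3) (C 3 3) (A 3 3)) = 0 := by
      rw [← Fphi_add, ← Fphi_add, ← Fphi_add, hs, Fphi_zero]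
    rw [Fin.sum_univ_seven, hv0, hv1, hv2, hv3, hv4, hv5, hv6]
    simp only [hps, Fphi_zero]
    linarith [hcomb]
  have h1 : ∀ j : Fin 7, ∑ i, Tbil T (nabla (E i) (E i)) (E j) = 0 := by
    intro j
    simp only [Tbil, inner7_E]
    fin_cases j
    · have h := hsum (E 1) (E 4) (E 5); simp only [psi_ext0] at h; exact h
    · have h := hsum (E 0) (E 4) (E 5); simp only [psi_ext1] at h; simpa using h
    · have h := hsum (E 3) (E 4) (E 5); simp only [psi_ext2] at h; exact h
    · have h := hsum (E 2) (E 4) (E 5); simp only [psi_ext3] at h; simpa using h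
    · have h := hsum (E 2) (E 3) (E 5); simp only [psi_ext4] at h; exact h
    · have h := hsum (E 2) (E 3) (E 4); simp only [psi_ext5] at h; simpa using h
    · have h := hsum (E 0) (E 2) (E 5); simp only [psi_ext6] at h; simpa using h
  refine ⟨h1, ?_, ?_, ?_⟩
  · have ha2 : nabla (E 1) (E 0) = 0 := by
      rw [hnab]; exact Kaa A B C 1 0 nPart_E1 nPart_E0 emb_w1 emb_w0
    have ha3 : nabla (E 6) (E 0) = 0 := by
      rw [hnab]; exact Kaa A B C 6 0 nPart_E6 nPart_E0 emb_w6 emb_w0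
    have hb2 : nabla (E 2) (E 0) = -emb ((symPart B).mulVec (Pi.single 0 1)) := by
      rw [hnab]
      exact Kna_gen A B C 2 0 0 B nPart_E2 (MX_E2 A B C) emb_w2 nPart_E0 (MX_E0 A B C) emb_w0
    have hb3 : nabla (E 3) (E 0) = -emb ((symPart B).mulVec (Pi.single 1 1)) := by
      rw [hnab]
      exact Kna_gen A B C 3 0 1 B nPart_E3 (MX_E3 A B C) emb_w3 nPart_E0 (MX_E0 A B C) emb_w0
    have hb4 : nabla (E 4) (E 0) = -emb ((symPart B).mulVec (Pi.single 2 1)) := by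
      rw [hnab]
      exact Kna_gen A B C 4 0 2 B nPart_E4 (MX_E4 A B C) emb_w4 nPart_E0 (MX_E0 A B C) emb_w0
    have hb5 : nabla (E 5) (E 0) = -emb ((symPart B).mulVec (Pi.single 3 1)) := by
      rw [hnab]
      exact Kna_gen A B C 5 0 3 B nPart_E5 (MX_E5 A B C) emb_w5 nPart_E0 (MX_E0 A B C) emb_w0
    rw [inner7_E]
    simp only [divT]
    rw [h1 0, Fin.sum_univ_seven, Fin.sum_univ_four, hv0, ha2, ha3, hb2, hb3, hb4, hb5,
      emb_single0, emb_single1, emb_single2, emb_single3]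
    simp only [Tbil_zero, Tbil_neg]
    ring
  · have ha2 : nabla (E 0) (E 1) = 0 := by
      rw [hnab]; exact Kaa A B C 0 1 nPart_E0 nPart_E1 emb_w0 emb_w1
    have ha3 : nabla (E 6) (E 1) = 0 := by
      rw [hnab]; exact Kaa A B C 6 1 nPart_E6 nPart_E1 emb_w6 emb_w1
    have hb2 : nabla (E 2) (E 1) = -emb ((symPart C).mulVec (Pi.single 0 1)) := by
      rw [hnab]
      exact Kna_gen A B C 2 1 0 C nPart_E2 (MX_E2 A B C) emb_w2 nPart_E1 (MX_E1 A B C) emb_w1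
    have hb3 : nabla (E 3) (E 1) = -emb ((symPart C).mulVec (Pi.single 1 1)) := by
      rw [hnab]
      exact Kna_gen A B C 3 1 1 C nPart_E3 (MX_E3 A B C) emb_w3 nPart_E1 (MX_E1 A B C) emb_w1
    have hb4 : nabla (E 4) (E 1) = -emb ((symPart C).mulVec (Pi.single 2 1)) := by
      rw [hnab]
      exact Kna_gen A B C 4 1 2 C nPart_E4 (MX_E4 A B C) emb_w4 nPart_E1 (MX_E1 A B C) emb_w1
    have hb5 : nabla (E 5) (E 1) = -emb ((symPart C).mulVec (Pi.single 3 1)) := by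
      rw [hnab]
      exact Kna_gen A B C 5 1 3 C nPart_E5 (MX_E5 A B C) emb_w5 nPart_E1 (MX_E1 A B C) emb_w1
    rw [inner7_E]
    simp only [divT]
    rw [h1 1, Fin.sum_univ_seven, Fin.sum_univ_four, hv1, ha2, ha3, hb2, hb3, hb4, hb5,
      emb_single0, emb_single1, emb_single2, emb_single3]
    simp only [Tbil_zero, Tbil_neg]
    ring
  · have ha2 : nabla (E 0) (E 6) = 0 := by
      rw [hnab]; exact Kaa A B C 0 6 nPart_E0 nPart_E6 emb_w0 emb_w6
    have ha3 : nabla (E 1) (E 6) = 0 := by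
      rw [hnab]; exact Kaa A B C 1 6 nPart_E1 nPart_E6 emb_w1 emb_w6
    have hb2 : nabla (E 2) (E 6) = -emb ((symPart A).mulVec (Pi.single 0 1)) := by
      rw [hnab]
      exact Kna_gen A B C 2 6 0 A nPart_E2 (MX_E2 A B C) emb_w2 nPart_E6 (MX_E6 A B C) emb_w6
    have hb3 : nabla (E 3) (E 6) = -emb ((symPart A).mulVec (Pi.single 1 1)) := by
      rw [hnab]
      exact Kna_gen A B C 3 6 1 A nPart_E3 (MX_E3 A B C) emb_w3 nPart_E6 (MX_E6 A B C) emb_w6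
    have hb4 : nabla (E 4) (E 6) = -emb ((symPart A).mulVec (Pi.single 2 1)) := by
      rw [hnab]
      exact Kna_gen A B C 4 6 2 A nPart_E4 (MX_E4 A B C) emb_w4 nPart_E6 (MX_E6 A B C) emb_w6
    have hb5 : nabla (E 5) (E 6) = -emb ((symPart A).mulVec (Pi.single 3 1)) := by
      rw [hnab]
      exact Kna_gen A B C 5 6 3 A nPart_E5 (MX_E5 A B C) emb_w5 nPart_E6 (MX_E6 A B C) emb_w6
    rw [inner7_E]
    simp only [divT]
    rw [h1 6, Fin.sum_univ_seven, Fin.sum_univ_four, hv6, ha2, ha3, hb2, hb3, hb4, hb5,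
      emb_single0, emb_single1, emb_single2, emb_single3]
    simp only [Tbil_zero, Tbil_neg]
    ring
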